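/- Let t₀ < t₁ be reals, let α : [t₀,t₁] → ℝ be continuously differentiable with α(x) > 0 on [t₀,t₁], let β, c : [t₀,t₁] → ℝ be continuous with c(x) ≥ 0 on [t₀,t₁], and let μ ∈ ℝ. Let u* : ℝ → ℝ be twice continuously differentiable with u*(x) > 0 for all x ∈ (t₀,t₁), u*(t₀) = u*(t₁) = 0, u*'(t₀) ≠ 0, u*'(t₁) ≠ 0, and −(α u*')'(x) + β(x)·u*(x) = μ·c(x)·u*(x) for all x ∈ [t₀,t₁]. Then every continuously differentiable w : ℝ → ℝ with w(t₀) = w(t₁) = 0 satisfies ∫_{t₀}^{t₁} (α(x)·w'(x)² + β(x)·w(x)²) dx ≥ μ·∫_{t₀}^{t₁} c(x)·w(x)² dx. -/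

import Mathlib

open Real MeasureTheory Set

theorem stmt_17
    (t₀ t₁ : ℝ) (ht : t₀ < t₁)
    (α β c : ℝ → ℝ)
    (hα : ContDiffOn ℝ 1 α (Icc t₀ t₁)) (hαpos : ∀ x ∈ Icc t₀ t₁, 0 < α x)
    (hβ : ContinuousOn β (Icc t₀ t₁)) (hc : ContinuousOn c (Icc t₀ t₁))
    (hcnn : ∀ x ∈ Icc t₀ t₁, 0 ≤ c x)
    (μ : ℝ)
    (ustar : ℝ → ℝ) (hustar : ContDiff ℝ 2 ustar)
    (hupos : ∀ x ∈ Ioo t₀ t₁, 0 < ustar x)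
    (h0 : ustar t₀ = 0) (h1 : ustar t₁ = 0)
    (hd0 : deriv ustar t₀ ≠ 0) (hd1 : deriv ustar t₁ ≠ 0)
    (hEL : ∀ x ∈ Icc t₀ t₁,
      -deriv (fun s => α s * deriv ustar s) x + β x * ustar x = μ * c x * ustar x)
    (w : ℝ → ℝ) (hw : ContDiff ℝ 1 w) (hw0 : w t₀ = 0) (hw1 : w t₁ = 0) :
    (∫ x in t₀..t₁, (α x * (deriv w x)^2 + β x * (w x)^2))
      ≥ μ * ∫ x in t₀..t₁, c x * (w x)^2 := by
  -- basic regularity facts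
  have hw_diff : Differentiable ℝ w := hw.differentiable one_ne_zero
  have hw_cont : Continuous w := hw_diff.continuous
  have hw'_cont : Continuous (deriv w) := hw.continuous_deriv le_rfl
  have hu_diff : Differentiable ℝ ustar := hustar.differentiable (by norm_num)
  have hu_cont : Continuous ustar := hu_diff.continuous
  have hustar2 : ContDiff ℝ (1 + 1) ustar := by norm_num; exact hustar
  have hu'_c1 : ContDiff ℝ 1 (deriv ustar) := (contDiff_succ_iff_deriv.mp hustar2).2.2
  have hu'_diff : Differentiable ℝ (deriv ustar) := hu'_c1.differentiable one_ne_zero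
  have hu'_cont : Continuous (deriv ustar) := hu'_c1.continuous
  have hαc : ContinuousOn α (Icc t₀ t₁) := hα.continuousOn
  -- main functions
  set g : ℝ → ℝ := fun x =>
    α x * (deriv w x)^2 + β x * (w x)^2 - μ * (c x * (w x)^2) with hg_def
  set h : ℝ → ℝ := fun x => α x * deriv ustar x * (w x)^2 / ustar x with hh_def
  set H : ℝ → ℝ := fun x =>
    g x - α x * (deriv w x - deriv ustar x / ustar x * w x)^2 with hH_def
  have hg_contOn : ContinuousOn g (Icc t₀ t₁) := by
    apply ContinuousOn.sub
    · exact (hαc.mul (hw'_cont.continuousOn.pow 2)).add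
        (hβ.mul (hw_cont.continuousOn.pow 2))
    · exact continuousOn_const.mul (hc.mul (hw_cont.continuousOn.pow 2))
  have huIcc : uIcc t₀ t₁ = Icc t₀ t₁ := uIcc_of_le ht.le
  have hg_int : IntervalIntegrable g volume t₀ t₁ := by
    apply ContinuousOn.intervalIntegrable
    rwa [huIcc]
  -- derivative of h on the open interval
  have hderiv : ∀ x ∈ Ioo t₀ t₁, HasDerivAt h (H x) x := by
    intro x hx
    have hxI : Icc t₀ t₁ ∈ nhds x := Icc_mem_nhds hx.1 hx.2
    have hune : ustar x ≠ 0 := (hupos x hx).ne'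
    have hα_dAt : DifferentiableAt ℝ α x := (hα.contDiffAt hxI).differentiableAt one_ne_zero
    have hA_dAt : DifferentiableAt ℝ (fun s => α s * deriv ustar s) x :=
      hα_dAt.mul (hu'_diff x)
    have hA : HasDerivAt (fun s => α s * deriv ustar s)
        (deriv (fun s => α s * deriv ustar s) x) x := hA_dAt.hasDerivAt
    have hw2 : HasDerivAt (fun s => (w s)^2) (2 * w x * deriv w x) x := by
      have := ((hw_diff x).hasDerivAt).fun_pow 2
      simpa [mul_comm, mul_assoc, mul_left_comm] using this
    have hnum : HasDerivAt (fun s => α s * deriv ustar s * (w s)^2)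
        (deriv (fun s => α s * deriv ustar s) x * (w x)^2
          + α x * deriv ustar x * (2 * w x * deriv w x)) x := hA.mul hw2
    have hu : HasDerivAt ustar (deriv ustar x) x := (hu_diff x).hasDerivAt
    have hdiv := hnum.div hu hune
    have hELx := hEL x ⟨hx.1.le, hx.2.le⟩
    have hAval : deriv (fun s => α s * deriv ustar s) x
        = β x * ustar x - μ * c x * ustar x := by linarith
    have hHval : H x = ((deriv (fun s => α s * deriv ustar s) x * (w x)^2
          + α x * deriv ustar x * (2 * w x * deriv w x)) * ustar x
          - α x * deriv ustar x * (w x)^2 * deriv ustar x) / (ustar x)^2 := by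
      simp only [hH_def, hg_def, hAval]
      field_simp
      ring
    exact hHval ▸ hdiv
  have hH_contOn : ∀ a b, t₀ < a → b < t₁ → ContinuousOn H (Icc a b) := by
    intro a b ha hb
    have hsub : Icc a b ⊆ Ioo t₀ t₁ := fun x hx => ⟨lt_of_lt_of_le ha hx.1, lt_of_le_of_lt hx.2 hb⟩
    have hsub' : Icc a b ⊆ Icc t₀ t₁ := hsub.trans Ioo_subset_Icc_self
    have hune : ∀ x ∈ Icc a b, ustar x ≠ 0 := fun x hx => (hupos x (hsub hx)).ne'
    apply ContinuousOn.sub (hg_contOn.mono hsub')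
    apply ContinuousOn.mul (hαc.mono hsub')
    apply ContinuousOn.pow
    exact (hw'_cont.continuousOn.sub
      (((hu'_cont.continuousOn.div hu_cont.continuousOn hune)).mul hw_cont.continuousOn))
  -- Step 1: the truncated inequality
  have step1 : ∀ a b, t₀ < a → a ≤ b → b < t₁ → (∫ x in a..b, g x) ≥ h b - h a := by
    intro a b ha hab hb
    have hsub : Icc a b ⊆ Ioo t₀ t₁ := fun x hx => ⟨lt_of_lt_of_le ha hx.1, lt_of_le_of_lt hx.2 hb⟩
    have hsub' : Icc a b ⊆ Icc t₀ t₁ := hsub.trans Ioo_subset_Icc_self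
    have hHint : IntervalIntegrable H volume a b := by
      have hco := hH_contOn a b ha hb
      apply ContinuousOn.intervalIntegrable
      rwa [uIcc_of_le hab]
    have hgint : IntervalIntegrable g volume a b := by
      apply ContinuousOn.intervalIntegrable
      rw [uIcc_of_le hab]
      exact hg_contOn.mono hsub'
    have hFTC : (∫ x in a..b, H x) = h b - h a := by
      apply intervalIntegral.integral_eq_sub_of_hasDerivAt
      · intro x hx
        rw [uIcc_of_le hab] at hx
        exact hderiv x (hsub hx)
      · exact hHint
    have hnn : 0 ≤ ∫ x in a..b, (g x - H x) := by
      apply intervalIntegral.integral_nonneg hab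
      intro x hx
      have : 0 ≤ α x := (hαpos x (hsub' hx)).le
      simp only [hH_def, sub_sub_cancel]
      positivity
    rw [intervalIntegral.integral_sub hgint hHint, hFTC] at hnn
    linarith
  -- boundedness of g
  obtain ⟨M, hM⟩ : ∃ M, ∀ x ∈ Icc t₀ t₁, ‖g x‖ ≤ M :=
    (isCompact_Icc.exists_bound_of_continuousOn hg_contOn)
  have hM0 : 0 ≤ M := le_trans (norm_nonneg _) (hM t₀ ⟨le_rfl, ht.le⟩)
  -- boundary limits of h
  have hlim0 : Filter.Tendsto h (nhdsWithin t₀ (Ioo t₀ t₁)) (nhds 0) := by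
    have hslope_w : Filter.Tendsto (slope w t₀) (nhdsWithin t₀ (Ioo t₀ t₁)) (nhds (deriv w t₀)) :=
      (hasDerivAt_iff_tendsto_slope.mp (hw_diff t₀).hasDerivAt).mono_left
        (nhdsWithin_mono _ (fun x hx => ne_of_gt hx.1))
    have hslope_u : Filter.Tendsto (slope ustar t₀) (nhdsWithin t₀ (Ioo t₀ t₁))
        (nhds (deriv ustar t₀)) :=
      (hasDerivAt_iff_tendsto_slope.mp (hu_diff t₀).hasDerivAt).mono_left
        (nhdsWithin_mono _ (fun x hx => ne_of_gt hx.1))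
    have hαt : Filter.Tendsto α (nhdsWithin t₀ (Ioo t₀ t₁)) (nhds (α t₀)) :=
      (hαc t₀ ⟨le_rfl, ht.le⟩).mono Ioo_subset_Icc_self
    have hvt : Filter.Tendsto (deriv ustar) (nhdsWithin t₀ (Ioo t₀ t₁)) (nhds (deriv ustar t₀)) :=
      (hu'_cont.tendsto t₀).mono_left nhdsWithin_le_nhds
    have hxt : Filter.Tendsto (fun x => x - t₀) (nhdsWithin t₀ (Ioo t₀ t₁)) (nhds 0) := by
      have : Filter.Tendsto (fun x : ℝ => x - t₀) (nhds t₀) (nhds (t₀ - t₀)) :=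
        (continuous_id.sub continuous_const).tendsto t₀
      simpa using this.mono_left nhdsWithin_le_nhds
    have hmain : Filter.Tendsto
        (fun x => α x * deriv ustar x * (slope w t₀ x)^2 * (x - t₀) / slope ustar t₀ x)
        (nhdsWithin t₀ (Ioo t₀ t₁))
        (nhds (α t₀ * deriv ustar t₀ * (deriv w t₀)^2 * 0 / deriv ustar t₀)) :=
      (((hαt.mul hvt).mul (hslope_w.pow 2)).mul hxt).div hslope_u hd0
    have heq : ∀ x ∈ Ioo t₀ t₁,
        α x * deriv ustar x * (slope w t₀ x)^2 * (x - t₀) / slope ustar t₀ x = h x := by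
      intro x hx
      have hxne : x - t₀ ≠ 0 := sub_ne_zero.mpr (ne_of_gt hx.1)
      have hune : ustar x ≠ 0 := (hupos x hx).ne'
      simp only [hh_def, slope_def_field, hw0, h0, sub_zero]
      field_simp
    have : Filter.Tendsto h (nhdsWithin t₀ (Ioo t₀ t₁))
        (nhds (α t₀ * deriv ustar t₀ * (deriv w t₀)^2 * 0 / deriv ustar t₀)) := by
      apply hmain.congr'
      filter_upwards [self_mem_nhdsWithin] with x hx using heq x hx
    simpa using this
  have hlim1 : Filter.Tendsto h (nhdsWithin t₁ (Ioo t₀ t₁)) (nhds 0) := by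
    have hslope_w : Filter.Tendsto (slope w t₁) (nhdsWithin t₁ (Ioo t₀ t₁)) (nhds (deriv w t₁)) :=
      (hasDerivAt_iff_tendsto_slope.mp (hw_diff t₁).hasDerivAt).mono_left
        (nhdsWithin_mono _ (fun x hx => ne_of_lt hx.2))
    have hslope_u : Filter.Tendsto (slope ustar t₁) (nhdsWithin t₁ (Ioo t₀ t₁))
        (nhds (deriv ustar t₁)) :=
      (hasDerivAt_iff_tendsto_slope.mp (hu_diff t₁).hasDerivAt).mono_left
        (nhdsWithin_mono _ (fun x hx => ne_of_lt hx.2))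
    have hαt : Filter.Tendsto α (nhdsWithin t₁ (Ioo t₀ t₁)) (nhds (α t₁)) :=
      (hαc t₁ ⟨ht.le, le_rfl⟩).mono Ioo_subset_Icc_self
    have hvt : Filter.Tendsto (deriv ustar) (nhdsWithin t₁ (Ioo t₀ t₁)) (nhds (deriv ustar t₁)) :=
      (hu'_cont.tendsto t₁).mono_left nhdsWithin_le_nhds
    have hxt : Filter.Tendsto (fun x => x - t₁) (nhdsWithin t₁ (Ioo t₀ t₁)) (nhds 0) := by
      have : Filter.Tendsto (fun x : ℝ => x - t₁) (nhds t₁) (nhds (t₁ - t₁)) :=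
        (continuous_id.sub continuous_const).tendsto t₁
      simpa using this.mono_left nhdsWithin_le_nhds
    have hmain : Filter.Tendsto
        (fun x => α x * deriv ustar x * (slope w t₁ x)^2 * (x - t₁) / slope ustar t₁ x)
        (nhdsWithin t₁ (Ioo t₀ t₁))
        (nhds (α t₁ * deriv ustar t₁ * (deriv w t₁)^2 * 0 / deriv ustar t₁)) :=
      (((hαt.mul hvt).mul (hslope_w.pow 2)).mul hxt).div hslope_u hd1
    have heq : ∀ x ∈ Ioo t₀ t₁,
        α x * deriv ustar x * (slope w t₁ x)^2 * (x - t₁) / slope ustar t₁ x = h x := by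
      intro x hx
      have hxne : x - t₁ ≠ 0 := sub_ne_zero.mpr (ne_of_lt hx.2)
      have hune : ustar x ≠ 0 := (hupos x hx).ne'
      simp only [hh_def, slope_def_field, hw1, h1, sub_zero]
      field_simp
    have : Filter.Tendsto h (nhdsWithin t₁ (Ioo t₀ t₁))
        (nhds (α t₁ * deriv ustar t₁ * (deriv w t₁)^2 * 0 / deriv ustar t₁)) := by
      apply hmain.congr'
      filter_upwards [self_mem_nhdsWithin] with x hx using heq x hx
    simpa using this
  -- Step 2: pass to the limit
  set L : ℝ := ∫ x in t₀..t₁, g x with hL_def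
  have key : ∀ ε : ℝ, 0 < ε → ε < (t₁ - t₀) / 2 →
      L ≥ h (t₁ - ε) - h (t₀ + ε) - 2 * M * ε := by
    intro ε hε hε2
    set a := t₀ + ε
    set b := t₁ - ε
    have ha : t₀ < a := by simp [a, hε]
    have hb : b < t₁ := by simp [b, hε]
    have hab : a ≤ b := by simp only [a, b]; linarith
    have hsub1 : uIcc t₀ a ⊆ uIcc t₀ t₁ := by
      rw [uIcc_of_le ha.le, huIcc]
      exact Icc_subset_Icc le_rfl (by linarith)
    have hsub2 : uIcc a b ⊆ uIcc t₀ t₁ := by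
      rw [uIcc_of_le hab, huIcc]
      exact Icc_subset_Icc ha.le hb.le
    have hsub3 : uIcc b t₁ ⊆ uIcc t₀ t₁ := by
      rw [uIcc_of_le hb.le, huIcc]
      exact Icc_subset_Icc (by linarith) le_rfl
    have hi1 : IntervalIntegrable g volume t₀ a := hg_int.mono_set hsub1
    have hi2 : IntervalIntegrable g volume a b := hg_int.mono_set hsub2
    have hi3 : IntervalIntegrable g volume b t₁ := hg_int.mono_set hsub3
    have hsplit : L = (∫ x in t₀..a, g x) + (∫ x in a..b, g x) + (∫ x in b..t₁, g x) := by
      rw [intervalIntegral.integral_add_adjacent_intervals hi1 hi2,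
        intervalIntegral.integral_add_adjacent_intervals (hi1.trans hi2) hi3]
    have hbd1 : ‖∫ x in t₀..a, g x‖ ≤ M * ε := by
      have := intervalIntegral.norm_integral_le_of_norm_le_const (a := t₀) (b := a) (C := M)
        (f := g) (fun x hx => hM x (by
          rw [uIoc_of_le ha.le] at hx
          exact ⟨hx.1.le, by simp only [a] at hx ⊢; linarith [hx.2]⟩))
      simpa [a, abs_of_pos hε] using this
    have hbd3 : ‖∫ x in b..t₁, g x‖ ≤ M * ε := by
      have := intervalIntegral.norm_integral_le_of_norm_le_const (a := b) (b := t₁) (C := M)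
        (f := g) (fun x hx => hM x (by
          rw [uIoc_of_le hb.le] at hx
          exact ⟨by simp only [b] at hx ⊢; linarith [hx.1], hx.2⟩))
      simpa [b, abs_of_pos hε, abs_sub_comm] using this
    have hmid : (∫ x in a..b, g x) ≥ h b - h a := step1 a b ha hab hb
    have h1' : (∫ x in t₀..a, g x) ≥ -(M * ε) := neg_le_of_abs_le (by simpa using hbd1)
    have h3' : (∫ x in b..t₁, g x) ≥ -(M * ε) := neg_le_of_abs_le (by simpa using hbd3)
    rw [hsplit]
    simp only [a, b] at *
    linarith
  -- take ε → 0⁺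
  have hL : 0 ≤ L := by
    have hhalf : 0 < (t₁ - t₀) / 2 := by linarith
    set l := nhdsWithin (0:ℝ) (Ioo 0 ((t₁ - t₀) / 2)) with hl_def
    have hlne : l.NeBot := by
      rw [hl_def, ← mem_closure_iff_nhdsWithin_neBot, closure_Ioo hhalf.ne]
      exact ⟨le_rfl, hhalf.le⟩
    have hmap0 : Filter.Tendsto (fun ε : ℝ => t₀ + ε) l (nhdsWithin t₀ (Ioo t₀ t₁)) := by
      rw [tendsto_nhdsWithin_iff]
      constructor
      · have : Filter.Tendsto (fun ε : ℝ => t₀ + ε) (nhds 0) (nhds (t₀ + 0)) :=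
          (continuous_const.add continuous_id).tendsto 0
        simpa using this.mono_left nhdsWithin_le_nhds
      · filter_upwards [self_mem_nhdsWithin] with ε hε
        exact ⟨by linarith [hε.1], by linarith [hε.2]⟩
    have hmap1 : Filter.Tendsto (fun ε : ℝ => t₁ - ε) l (nhdsWithin t₁ (Ioo t₀ t₁)) := by
      rw [tendsto_nhdsWithin_iff]
      constructor
      · have : Filter.Tendsto (fun ε : ℝ => t₁ - ε) (nhds 0) (nhds (t₁ - 0)) :=
          (continuous_const.sub continuous_id).tendsto 0
        simpa using this.mono_left nhdsWithin_le_nhds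
      · filter_upwards [self_mem_nhdsWithin] with ε hε
        exact ⟨by linarith [hε.2], by linarith [hε.1]⟩
    have hA := hlim0.comp hmap0
    have hB := hlim1.comp hmap1
    have hC : Filter.Tendsto (fun ε : ℝ => 2 * M * ε) l (nhds 0) := by
      have : Filter.Tendsto (fun ε : ℝ => 2 * M * ε) (nhds 0) (nhds (2 * M * 0)) :=
        (continuous_const.mul continuous_id).tendsto 0
      simpa using this.mono_left nhdsWithin_le_nhds
    have hRHS : Filter.Tendsto (fun ε : ℝ => h (t₁ - ε) - h (t₀ + ε) - 2 * M * ε) l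
        (nhds 0) := by
      have := (hB.sub hA).sub hC
      simpa using this
    have hev : ∀ᶠ ε in l, h (t₁ - ε) - h (t₀ + ε) - 2 * M * ε ≤ L := by
      filter_upwards [self_mem_nhdsWithin] with ε hε
      exact key ε hε.1 hε.2
    exact le_of_tendsto hRHS hev
  -- conclude
  have hf1 : IntervalIntegrable (fun x => α x * (deriv w x)^2 + β x * (w x)^2) volume t₀ t₁ := by
    apply ContinuousOn.intervalIntegrable
    rw [huIcc]
    exact (hαc.mul (hw'_cont.continuousOn.pow 2)).add (hβ.mul (hw_cont.continuousOn.pow 2))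
  have hf2 : IntervalIntegrable (fun x => μ * (c x * (w x)^2)) volume t₀ t₁ := by
    apply ContinuousOn.intervalIntegrable
    rw [huIcc]
    exact continuousOn_const.mul (hc.mul (hw_cont.continuousOn.pow 2))
  have : L = (∫ x in t₀..t₁, (α x * (deriv w x)^2 + β x * (w x)^2))
      - μ * ∫ x in t₀..t₁, c x * (w x)^2 := by
    rw [hL_def, hg_def]
    rw [intervalIntegral.integral_sub hf1 hf2, intervalIntegral.integral_const_mul]
  linarith [this ▸ hL]
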